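/- For integers 0 ≤ ν < μ, let Z be the multiset of roots of p(x) = (d/dx)^{μ+ν}(x² − 1)^μ that are not equal to ±1 (i.e. all roots of p, counted with multiplicity). Then Σ_{ζ ∈ Z} 1/(2 − 2ζ²) = (μ − ν)(μ + ν + 1)/(4(ν + 1)). -/

import Mathlib

open Polynomial Finset

private lemma iterDerivPow (a : ℝ) (n : ℕ) : ∀ k : ℕ,
    derivative^[k] ((X - C a) ^ n) = (n.descFactorial k) • (X - C a) ^ (n - k) := by
  intro k
  induction k with
  | zero => simp
  | succ k ih =>
    rw [Function.iterate_succ_apply', ih, derivative_smul, derivative_pow]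
    simp only [derivative_sub, derivative_X, derivative_C, sub_zero, mul_one,
      Nat.descFactorial_succ, nsmul_eq_mul, Nat.cast_mul, C_eq_natCast, Nat.sub_succ',
      Nat.sub_zero]
    ring

private lemma evalIterDerivPow (a x : ℝ) (n k : ℕ) :
    eval x (derivative^[k] ((X - C a) ^ n)) = (n.descFactorial k : ℝ) * (x - a) ^ (n - k) := by
  rw [iterDerivPow]
  simp [nsmul_eq_mul]

private lemma splitq (μ : ℕ) :
    ((X:ℝ[X])^2 - 1)^μ = (X - C (-1:ℝ))^μ * (X - C (1:ℝ))^μ := by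
  rw [← mul_pow]; congr 1
  simp only [map_one, map_neg]; ring

private lemma evalAtOne (μ m : ℕ) (hm : μ ≤ m) :
    eval 1 (derivative^[m] (((X:ℝ[X])^2 - 1)^μ)) =
      (m.choose μ : ℝ) * (μ.factorial : ℝ) *
        ((μ.descFactorial (m - μ) : ℝ) * 2 ^ (μ - (m - μ))) := by
  rw [splitq, iterate_derivative_mul, eval_finset_sum]
  have key : ∀ k, eval 1 ((m.choose k) •
      (derivative^[m-k] ((X - C (-1:ℝ))^μ) * derivative^[k] ((X - C (1:ℝ))^μ))) =
      (m.choose k : ℝ) * ((μ.descFactorial (m-k) : ℝ) * 2^(μ-(m-k))) *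
        ((μ.descFactorial k : ℝ) * (0:ℝ)^(μ-k)) := by
    intro k
    rw [nsmul_eq_mul, eval_mul, eval_natCast, eval_mul, evalIterDerivPow, evalIterDerivPow]
    norm_num
    ring
  rw [Finset.sum_eq_single μ]
  · rw [key]
    rw [Nat.sub_self, pow_zero, Nat.descFactorial_self]
    ring
  · intro k hk hkμ
    rw [key]
    rcases lt_or_gt_of_ne hkμ with h | h
    · rw [zero_pow (by omega)]; ring
    · rw [Nat.descFactorial_eq_zero_iff_lt.2 h]; simp
  · intro h
    exact absurd (Finset.mem_range.2 (by omega)) h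

private lemma evalAtNegOne (μ m : ℕ) (hm : μ ≤ m) :
    eval (-1) (derivative^[m] (((X:ℝ[X])^2 - 1)^μ)) =
      (m.choose (m - μ) : ℝ) * (μ.factorial : ℝ) *
        ((μ.descFactorial (m - μ) : ℝ) * (-2) ^ (μ - (m - μ))) := by
  rw [splitq, iterate_derivative_mul, eval_finset_sum]
  have key : ∀ k, eval (-1) ((m.choose k) •
      (derivative^[m-k] ((X - C (-1:ℝ))^μ) * derivative^[k] ((X - C (1:ℝ))^μ))) =
      (m.choose k : ℝ) * ((μ.descFactorial (m-k) : ℝ) * (0:ℝ)^(μ-(m-k))) *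
        ((μ.descFactorial k : ℝ) * (-2:ℝ)^(μ-k)) := by
    intro k
    rw [nsmul_eq_mul, eval_mul, eval_natCast, eval_mul, evalIterDerivPow, evalIterDerivPow]
    norm_num
    ring
  rw [Finset.sum_eq_single (m - μ)]
  · rw [key]
    have h1 : m - (m - μ) = μ := by omega
    rw [h1, Nat.sub_self, pow_zero, Nat.descFactorial_self]
    ring
  · intro k hk hkμ
    rw [key]
    have hkm : k ≤ m := by simpa using Nat.lt_succ_iff.1 (Finset.mem_range.1 hk)
    rcases lt_or_gt_of_ne (show m - k ≠ μ by omega) with h | h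
    · rw [zero_pow (by omega)]; ring
    · rw [Nat.descFactorial_eq_zero_iff_lt.2 h]; simp
  · intro h
    exact absurd (Finset.mem_range.2 (by omega)) h

private lemma logDerivAux (x : ℝ) (s : Multiset ℝ) (hx : ∀ a ∈ s, x ≠ a) :
    eval x (derivative (s.map (fun a => X - C a)).prod) =
      eval x ((s.map (fun a => X - C a)).prod) * (s.map (fun a => 1 / (x - a))).sum := by
  induction s using Multiset.induction_on with
  | empty => simp
  | cons a s ih =>
    have hxa : x - a ≠ 0 := sub_ne_zero.2 (hx a (Multiset.mem_cons_self a s))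
    have ih' := ih (fun b hb => hx b (Multiset.mem_cons_of_mem hb))
    simp only [Multiset.map_cons, Multiset.prod_cons, Multiset.sum_cons, derivative_mul,
      derivative_sub, derivative_X, derivative_C, sub_zero, eval_add, eval_mul, eval_one,
      one_mul, eval_sub, eval_X, eval_C, ih']
    field_simp

theorem stmt14 (μ ν : ℕ) (hν : ν < μ)
    (p : Polynomial ℝ)
    (hp : p = (Polynomial.derivative^[μ + ν]) ((X ^ 2 - 1 : Polynomial ℝ) ^ μ)) :
    (p.roots.map (fun ζ => 1 / (2 - 2 * ζ ^ 2))).sum =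
      ((μ : ℝ) - ν) * ((μ : ℝ) + ν + 1) / (4 * ((ν : ℝ) + 1)) := by
  set m : ℕ := μ + ν with hmdef
  have hm : μ ≤ m := Nat.le_add_right μ ν
  have hmμ : m - μ = ν := by omega
  have hmμ1 : m + 1 - μ = ν + 1 := by omega
  -- evaluations
  have e1 : eval 1 p = (m.choose μ : ℝ) * (μ.factorial : ℝ) *
      ((μ.descFactorial ν : ℝ) * 2 ^ (μ - ν)) := by
    rw [hp]
    have := evalAtOne μ m hm
    rwa [hmμ] at this
  have e1' : eval 1 (derivative p) = ((m+1).choose μ : ℝ) * (μ.factorial : ℝ) *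
      ((μ.descFactorial (ν+1) : ℝ) * 2 ^ (μ - ν - 1)) := by
    rw [hp, ← Function.iterate_succ_apply' derivative m]
    have := evalAtOne μ (m+1) (by omega)
    rwa [hmμ1, show μ - (ν + 1) = μ - ν - 1 by omega] at this
  have em : eval (-1) p = (m.choose ν : ℝ) * (μ.factorial : ℝ) *
      ((μ.descFactorial ν : ℝ) * (-2) ^ (μ - ν)) := by
    rw [hp]
    have := evalAtNegOne μ m hm
    rwa [hmμ] at this
  have em' : eval (-1) (derivative p) = ((m+1).choose (ν+1) : ℝ) * (μ.factorial : ℝ) *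
      ((μ.descFactorial (ν+1) : ℝ) * (-2) ^ (μ - ν - 1)) := by
    rw [hp, ← Function.iterate_succ_apply' derivative m]
    have := evalAtNegOne μ (m+1) (by omega)
    rwa [hmμ1, show μ - (ν + 1) = μ - ν - 1 by omega] at this
  -- nonvanishing at ±1
  have hcν : 0 < m.choose ν := Nat.choose_pos (by omega)
  have hd : 0 < μ.descFactorial ν := Nat.pos_of_ne_zero
    (fun h => absurd (Nat.descFactorial_eq_zero_iff_lt.1 h) (by omega))
  have he1 : eval 1 p ≠ 0 := by
    rw [e1]
    have : 0 < m.choose μ := Nat.choose_pos hm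
    positivity
  have hem : eval (-1) p ≠ 0 := by
    rw [em]
    intro h
    rcases mul_eq_zero.1 h with h | h
    · rcases mul_eq_zero.1 h with h | h
      · exact absurd h (by positivity)
      · exact absurd h (by positivity)
    · rcases mul_eq_zero.1 h with h | h
      · exact absurd h (by positivity)
      · exact pow_ne_zero _ (by norm_num : (-2:ℝ) ≠ 0) h
  have hp0 : p ≠ 0 := fun h => he1 (by simp [h])
  -- roots: all real
  have hq0 : ((X - C (-1:ℝ))^μ * (X - C (1:ℝ))^μ) ≠ 0 :=
    mul_ne_zero (pow_ne_zero _ (X_sub_C_ne_zero _)) (pow_ne_zero _ (X_sub_C_ne_zero _))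
  have rolle : ∀ k : ℕ, 2*μ - k ≤ Multiset.card ((derivative^[k] (((X:ℝ[X])^2 - 1)^μ)).roots) := by
    intro k
    induction k with
    | zero =>
      simp only [Function.iterate_zero_apply, Nat.sub_zero]
      rw [splitq, roots_mul hq0, roots_pow, roots_pow, roots_X_sub_C, roots_X_sub_C]
      simp [Multiset.card_nsmul]
      omega
    | succ k ih =>
      have h2 := Polynomial.card_roots_le_derivative (derivative^[k] (((X:ℝ[X])^2 - 1)^μ))
      rw [Function.iterate_succ_apply']
      omega
  have hdeg : p.natDegree ≤ μ - ν := by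
    rw [hp]
    refine (natDegree_iterate_derivative _ _).trans ?_
    have : (((X:ℝ[X])^2 - 1)^μ).natDegree ≤ 2*μ := by
      refine natDegree_pow_le.trans ?_
      have : ((X:ℝ[X])^2 - 1).natDegree ≤ 2 := by compute_degree
      nlinarith [this]
    omega
  have hcard : Multiset.card p.roots = p.natDegree := by
    have h1 : μ - ν ≤ Multiset.card p.roots := by
      have := rolle m
      rw [← hp] at this
      omega
    have h2 := p.card_roots'
    omega
  obtain hfac := Polynomial.C_leadingCoeff_mul_prod_multiset_X_sub_C hcard
  -- logarithmic derivative at a point off the roots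
  have key : ∀ x : ℝ, (∀ a ∈ p.roots, x ≠ a) →
      eval x (derivative p) = eval x p * (p.roots.map (fun a => 1 / (x - a))).sum := by
    intro x hx
    have hL : eval x (derivative p) = p.leadingCoeff *
        (eval x ((p.roots.map (fun a => X - C a)).prod) *
          (p.roots.map (fun a => 1 / (x - a))).sum) := by
      conv_lhs => rw [← hfac]
      rw [derivative_mul, derivative_C, zero_mul, zero_add, eval_mul, eval_C,
        logDerivAux x p.roots hx]
    have hR : eval x p = p.leadingCoeff * eval x ((p.roots.map (fun a => X - C a)).prod) := by
      conv_lhs => rw [← hfac]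
      rw [eval_mul, eval_C]
    rw [hL, hR]
    ring
  have hroot1 : ∀ a ∈ p.roots, (1:ℝ) ≠ a := by
    intro a ha h
    exact he1 (h ▸ (Polynomial.isRoot_of_mem_roots ha))
  have hrootm : ∀ a ∈ p.roots, (-1:ℝ) ≠ a := by
    intro a ha h
    exact hem (h ▸ (Polynomial.isRoot_of_mem_roots ha))
  have k1 := key 1 hroot1
  have km := key (-1) hrootm
  set S1 : ℝ := (p.roots.map (fun a => 1 / ((1:ℝ) - a))).sum with hS1def
  set Sm : ℝ := (p.roots.map (fun a => 1 / ((-1:ℝ) - a))).sum with hSmdef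
  -- rewrite the target sum
  have hsum : (p.roots.map (fun ζ => 1 / (2 - 2 * ζ ^ 2))).sum
      = (1/4) * S1 - (1/4) * Sm := by
    have hmap : p.roots.map (fun ζ => 1 / (2 - 2 * ζ ^ 2)) =
        p.roots.map (fun ζ => (1/4) * (1 / ((1:ℝ) - ζ)) + (-(1/4)) * (1 / ((-1:ℝ) - ζ))) := by
      refine Multiset.map_congr rfl (fun ζ hζ => ?_)
      have h1 : (1:ℝ) - ζ ≠ 0 := sub_ne_zero.2 (hroot1 ζ hζ)
      have h2 : (-1:ℝ) - ζ ≠ 0 := sub_ne_zero.2 (hrootm ζ hζ)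
      have h3 : (2:ℝ) - 2 * ζ ^ 2 ≠ 0 := by
        have : (2:ℝ) - 2 * ζ ^ 2 = -2 * ((1 - ζ) * (-1 - ζ)) := by ring
        rw [this]
        exact mul_ne_zero (by norm_num) (mul_ne_zero h1 h2)
      have h4 : (1:ℝ) - ζ ^ 2 ≠ 0 := by intro h; apply h3; linear_combination 2 * h
      field_simp
      ring
    rw [hmap, Multiset.sum_map_add, Multiset.sum_map_mul_left, Multiset.sum_map_mul_left,
      hS1def, hSmdef]
    ring
  -- abbreviations and basic facts
  set w : ℝ := ((μ - ν : ℕ) : ℝ) with hwdef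
  set c : ℝ := (m.choose ν : ℝ) with hcdef
  set c' : ℝ := ((m+1).choose (ν+1) : ℝ) with hc'def
  set F : ℝ := (μ.factorial : ℝ) with hFdef
  set d : ℝ := (μ.descFactorial ν : ℝ) with hddef
  set t : ℝ := (2:ℝ) ^ (μ - ν - 1) with htdef
  set u : ℝ := (-2:ℝ) ^ (μ - ν - 1) with hudef
  have hch1 : m.choose μ = m.choose ν := by rw [← hmμ, Nat.choose_symm hm]
  have hch2 : (m+1).choose μ = (m+1).choose (ν+1) := by
    rw [← hmμ1, Nat.choose_symm (by omega)]
  have hds : (μ.descFactorial (ν+1) : ℝ) = w * d := by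
    rw [Nat.descFactorial_succ]; push_cast; ring
  have hcc : ((m+1 : ℕ) : ℝ) * c = c' * ((ν:ℝ) + 1) := by
    rw [hcdef, hc'def]
    exact_mod_cast congrArg (Nat.cast (R := ℝ)) (Nat.add_one_mul_choose_eq m ν)
  have hpow2 : (2:ℝ) ^ (μ - ν) = 2 * t := by
    rw [htdef, mul_comm, ← pow_succ]; congr 1; omega
  have hpowm : (-2:ℝ) ^ (μ - ν) = -2 * u := by
    rw [hudef, mul_comm, ← pow_succ]; congr 1; omega
  have hF0 : F ≠ 0 := by rw [hFdef]; positivity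
  have hd0 : d ≠ 0 := by rw [hddef]; exact_mod_cast hd.ne'
  have ht0 : t ≠ 0 := by rw [htdef]; positivity
  have hu0 : u ≠ 0 := pow_ne_zero _ (by norm_num)
  have hc0 : c ≠ 0 := by rw [hcdef]; exact_mod_cast hcν.ne'
  -- the two logarithmic-derivative values
  rw [e1', e1, hch1, hch2, hds, hpow2] at k1
  rw [em', em, hds, hpowm] at km
  have hS1 : S1 * (2 * c) = c' * w := by
    apply mul_left_cancel₀ (mul_ne_zero hF0 (mul_ne_zero hd0 ht0))
    linear_combination -k1
  have hSm : Sm * (2 * c) = -(c' * w) := by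
    apply mul_left_cancel₀ (mul_ne_zero hF0 (mul_ne_zero hd0 hu0))
    linear_combination km
  -- final computation
  have hw : w = (μ:ℝ) - ν := by rw [hwdef]; push_cast [Nat.cast_sub hν.le]; ring
  have hm1 : ((m+1 : ℕ) : ℝ) = (μ:ℝ) + ν + 1 := by rw [hmdef]; push_cast; ring
  rw [hsum, ← hw, ← hm1]
  rw [eq_div_iff (by positivity : (4:ℝ) * ((ν:ℝ) + 1) ≠ 0)]
  apply mul_right_cancel₀ (mul_ne_zero (two_ne_zero) hc0)
  linear_combination ((ν:ℝ)+1) * hS1 - ((ν:ℝ)+1) * hSm - 2 * w * hcc
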